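/- Let R be a sub-semigroup-like set of finite words closed under taking factors arising from a subshift (i.e., if ρ₁ρ₂ ∈ R then ρ₁, ρ₂ ∈ R), let s ≥ 0, and let ρ_1,...,ρ_K ∈ R be such that every word in R of length at least N is divisible (as a prefix) by some ρ_k. If ∑_{k=1}^K c^{−s·len(ρ_k)} < 1 for some c > 1, then ∑_{ρ ∈ R} c^{−s·len(ρ)} < ∞; in particular, if additionally |R_m| c^{−sm} > 1 for all sufficiently large m (where R_m is the set of words of length m in R), a contradiction results, so ∑_{k=1}^K c^{−s·len(ρ_k)} ≥ 1. -/
import Mathlib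


open Filter Topology

/-- Furstenberg's combinatorial lemma. Let `R` be the language of a subshift
over a finite alphabet (a factor-closed set of nonempty words), `s ≥ 0`,
`c > 1`, and `ρ₁,…,ρ_K ∈ R` such that every word of `R` of length ≥ `N` has
some `ρ_k` as a prefix. If `∑_k c^{-s·len(ρ_k)} < 1` then
`∑_{ρ∈R} c^{-s·len(ρ)}` converges; and if moreover `|R_m|·c^{-sm} > 1` for
all sufficiently large `m`, then in fact `∑_k c^{-s·len(ρ_k)} ≥ 1`. -/
theorem stmt19 (A : Type*) [Fintype A] (R : Set (List A))
    (hne : ∀ ρ ∈ R, ρ ≠ [])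
    (hfac : ∀ ρ₁ ρ₂ : List A, ρ₁ ≠ [] → ρ₂ ≠ [] → ρ₁ ++ ρ₂ ∈ R → ρ₁ ∈ R ∧ ρ₂ ∈ R)
    (s : ℝ) (hs : 0 ≤ s) (c : ℝ) (hc : 1 < c)
    (K : ℕ) (ρ : Fin K → List A) (hρ : ∀ k, ρ k ∈ R) (N : ℕ)
    (hdiv : ∀ w ∈ R, N ≤ w.length → ∃ k : Fin K, (ρ k) <+: w) :
    ((∑ k : Fin K, c ^ (-(s * ((ρ k).length : ℝ))) < 1) →
      Summable (fun w : ↥R => c ^ (-(s * ((w : List A).length : ℝ))))) ∧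
    ((∀ᶠ m : ℕ in atTop,
        1 < (Nat.card {w : List A | w ∈ R ∧ w.length = m} : ℝ) * c ^ (-(s * (m : ℝ)))) →
      1 ≤ ∑ k : Fin K, c ^ (-(s * ((ρ k).length : ℝ)))) := by
  classical
  have hcpos : (0:ℝ) < c := lt_trans one_pos hc
  have hrpos : ∀ x : ℝ, 0 < c ^ x := fun x => Real.rpow_pos_of_pos hcpos x
  set L : ℕ := Finset.univ.sup (fun k : Fin K => (ρ k).length) with hLdef
  have hlL : ∀ k, (ρ k).length ≤ L := fun k => Finset.le_sup (f := fun k : Fin K => (ρ k).length) (Finset.mem_univ k)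
  set M : ℕ := max N (L + 1) with hMdef
  have hWfin : ∀ m : ℕ, {w : List A | w ∈ R ∧ w.length = m}.Finite := fun m =>
    (List.finite_length_eq A m).subset fun w hw => hw.2
  set W : ℕ → Finset (List A) := fun m => (hWfin m).toFinset with hWdef
  have hWmem : ∀ m w, w ∈ W m ↔ (w ∈ R ∧ w.length = m) := by
    intro m w
    simp [hWdef, Set.Finite.mem_toFinset]
  set g : ℕ → ℝ := fun m => ((W m).card : ℝ) * c ^ (-(s * (m:ℝ))) with hgdef
  have hgnn : ∀ m, 0 ≤ g m := fun m => mul_nonneg (Nat.cast_nonneg _) (hrpos _).le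
  set θ : ℝ := ∑ k : Fin K, c ^ (-(s * ((ρ k).length : ℝ))) with hθdef
  have hθnn : 0 ≤ θ := Finset.sum_nonneg fun k _ => (hrpos _).le
  -- card recursion
  have hcard : ∀ m, M ≤ m → (W m).card ≤ ∑ k : Fin K, (W (m - (ρ k).length)).card := by
    intro m hm
    have hsub : W m ⊆ Finset.univ.biUnion
        (fun k : Fin K => (W (m - (ρ k).length)).image ((ρ k) ++ ·)) := by
      intro w hw
      rw [hWmem] at hw
      obtain ⟨hwR, hwlen⟩ := hw
      have hNm : N ≤ w.length := by omega
      obtain ⟨k, w', rfl⟩ := hdiv w hwR hNm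
      have hlen : (ρ k).length + w'.length = m := by
        simpa using hwlen
      have hkL : (ρ k).length ≤ L := hlL k
      have hw'ne : w' ≠ [] := by
        intro h
        subst h
        simp at hlen
        omega
      have hw'R : w' ∈ R := (hfac (ρ k) w' (hne _ (hρ k)) hw'ne hwR).2
      refine Finset.mem_biUnion.2 ⟨k, Finset.mem_univ k, Finset.mem_image.2 ⟨w', ?_, rfl⟩⟩
      rw [hWmem]
      exact ⟨hw'R, by omega⟩
    calc (W m).card ≤ _ := Finset.card_le_card hsub
      _ ≤ ∑ k : Fin K, ((W (m - (ρ k).length)).image ((ρ k) ++ ·)).card :=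
          Finset.card_biUnion_le
      _ ≤ ∑ k : Fin K, (W (m - (ρ k).length)).card :=
          Finset.sum_le_sum fun k _ => Finset.card_image_le
  have hsplit : ∀ (k : Fin K) (m : ℕ), (ρ k).length ≤ m →
      c ^ (-(s * (m:ℝ))) = c ^ (-(s * ((ρ k).length : ℝ))) *
        c ^ (-(s * ((m - (ρ k).length : ℕ) : ℝ))) := by
    intro k m hkm
    rw [← Real.rpow_add hcpos]
    congr 1
    rw [Nat.cast_sub hkm]
    ring
  have hrec : ∀ m, M ≤ m →
      g m ≤ ∑ k : Fin K, c ^ (-(s * ((ρ k).length : ℝ))) * g (m - (ρ k).length) := by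
    intro m hm
    have h1 : g m ≤ (∑ k : Fin K, ((W (m - (ρ k).length)).card : ℝ)) * c ^ (-(s * (m:ℝ))) := by
      apply mul_le_mul_of_nonneg_right _ (hrpos _).le
      exact_mod_cast hcard m hm
    rw [Finset.sum_mul] at h1
    refine h1.trans (le_of_eq (Finset.sum_congr rfl fun k _ => ?_))
    have hkm : (ρ k).length ≤ m := le_trans (hlL k) (by omega)
    rw [hsplit k m hkm, hgdef]
    ring
  set P : ℕ → ℝ := fun n => ∑ m ∈ Finset.range n, g m with hPdef
  have hPnn : ∀ n, 0 ≤ P n := fun n => Finset.sum_nonneg fun m _ => hgnn m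
  have hPmono : ∀ {a b : ℕ}, a ≤ b → P a ≤ P b := by
    intro a b hab
    exact Finset.sum_le_sum_of_subset_of_nonneg (Finset.range_subset_range.mpr hab)
      fun i _ _ => hgnn i
  have hPkey : ∀ n, P n ≤ P M + θ * P n := by
    intro n
    rcases le_or_gt n M with h | h
    · have h1 : P n ≤ P M := hPmono h
      nlinarith [mul_nonneg hθnn (hPnn n)]
    · have hsplitP : P n = P M + ∑ m ∈ Finset.Ico M n, g m := by
        rw [hPdef]
        simp only [Finset.range_eq_Ico]
        rw [← Finset.sum_Ico_consecutive _ (Nat.zero_le M) h.le]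
      have h2 : ∑ m ∈ Finset.Ico M n, g m ≤ θ * P n := by
        have hinner : ∀ k : Fin K, ∑ m ∈ Finset.Ico M n, g (m - (ρ k).length) ≤ P n := by
          intro k
          have hinj : ∀ a ∈ Finset.Ico M n, ∀ b ∈ Finset.Ico M n,
              a - (ρ k).length = b - (ρ k).length → a = b := by
            intro a ha b hb hab
            rw [Finset.mem_Ico] at ha hb
            have hkL := hlL k
            omega
          rw [← Finset.sum_image hinj]
          refine Finset.sum_le_sum_of_subset_of_nonneg ?_ fun i _ _ => hgnn i
          intro j hj
          rw [Finset.mem_image] at hj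
          obtain ⟨m, hm, rfl⟩ := hj
          rw [Finset.mem_Ico] at hm
          rw [Finset.mem_range]
          omega
        calc ∑ m ∈ Finset.Ico M n, g m
            ≤ ∑ m ∈ Finset.Ico M n, ∑ k : Fin K,
                c ^ (-(s * ((ρ k).length : ℝ))) * g (m - (ρ k).length) :=
              Finset.sum_le_sum fun m hm => hrec m (Finset.mem_Ico.1 hm).1
          _ = ∑ k : Fin K, c ^ (-(s * ((ρ k).length : ℝ))) *
                ∑ m ∈ Finset.Ico M n, g (m - (ρ k).length) := by
              rw [Finset.sum_comm]
              exact Finset.sum_congr rfl fun k _ => (Finset.mul_sum _ _ _).symm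
          _ ≤ ∑ k : Fin K, c ^ (-(s * ((ρ k).length : ℝ))) * P n :=
              Finset.sum_le_sum fun k _ =>
                mul_le_mul_of_nonneg_left (hinner k) (hrpos _).le
          _ = θ * P n := (Finset.sum_mul _ _ _).symm
      linarith [hsplitP, h2]
  -- bounded partial sums when θ < 1
  have hPbound : θ < 1 → ∀ n, P n ≤ P M / (1 - θ) := by
    intro hθ n
    have h1θ : (0:ℝ) < 1 - θ := by linarith
    rw [le_div_iff₀ h1θ]
    have := hPkey n
    nlinarith
  constructor
  · -- part 1
    intro hθ
    refine summable_of_sum_le (c := P M / (1 - θ)) (fun w => (hrpos _).le) ?_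
    intro u
    set n : ℕ := (u.sup fun w => (w : List A).length) + 1 with hn
    have hinj : ∀ a ∈ u, ∀ b ∈ u, (a : List A) = (b : List A) → a = b :=
      fun a _ b _ h => Subtype.ext h
    have h1 : ∑ w ∈ u, c ^ (-(s * ((w : List A).length : ℝ)))
        = ∑ x ∈ u.image Subtype.val, c ^ (-(s * (x.length : ℝ))) :=
      (Finset.sum_image (f := fun x : List A => c ^ (-(s * (x.length : ℝ)))) hinj).symm
    have hsub : u.image Subtype.val ⊆ (Finset.range n).biUnion W := by
      intro x hx
      rw [Finset.mem_image] at hx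
      obtain ⟨w, hw, rfl⟩ := hx
      refine Finset.mem_biUnion.2 ⟨(w : List A).length, ?_, ?_⟩
      · rw [Finset.mem_range]
        have : (w : List A).length ≤ u.sup fun w => (w : List A).length :=
          Finset.le_sup (f := fun w : ↥R => (w : List A).length) hw
        omega
      · rw [hWmem]
        exact ⟨w.2, rfl⟩
    have hdisj : ∀ m1 ∈ Finset.range n, ∀ m2 ∈ Finset.range n, m1 ≠ m2 →
        Disjoint (W m1) (W m2) := by
      intro m1 _ m2 _ hne12
      rw [Finset.disjoint_left]
      intro x hx1 hx2
      rw [hWmem] at hx1 hx2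
      exact hne12 (hx1.2 ▸ hx2.2 ▸ rfl)
    have h2 : ∑ x ∈ u.image Subtype.val, c ^ (-(s * (x.length : ℝ)))
        ≤ ∑ x ∈ (Finset.range n).biUnion W, c ^ (-(s * (x.length : ℝ))) :=
      Finset.sum_le_sum_of_subset_of_nonneg hsub fun i _ _ => (hrpos _).le
    have h3 : ∑ x ∈ (Finset.range n).biUnion W, c ^ (-(s * (x.length : ℝ))) = P n := by
      rw [Finset.sum_biUnion hdisj]
      refine Finset.sum_congr rfl fun m _ => ?_
      have : ∀ x ∈ W m, c ^ (-(s * (x.length : ℝ))) = c ^ (-(s * (m : ℝ))) := by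
        intro x hx
        rw [hWmem] at hx
        rw [hx.2]
      rw [Finset.sum_congr rfl this, Finset.sum_const, nsmul_eq_mul, hgdef]
    calc ∑ w ∈ u, c ^ (-(s * ((w : List A).length : ℝ))) = _ := h1
      _ ≤ _ := h2
      _ = P n := h3
      _ ≤ P M / (1 - θ) := hPbound hθ n
  · -- part 2
    intro hev
    by_contra hcon
    push_neg at hcon
    have hsumg : Summable g := summable_of_sum_range_le hgnn (hPbound hcon)
    have h0 : Tendsto g atTop (𝓝 0) := hsumg.tendsto_atTop_zero
    have hlt : ∀ᶠ m in atTop, g m < 1 := h0.eventually_lt_const one_pos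
    have hNcard : ∀ m : ℕ, (Nat.card {w : List A | w ∈ R ∧ w.length = m} : ℝ)
        = ((W m).card : ℝ) := by
      intro m
      rw [Nat.card_coe_set_eq, Set.ncard_eq_toFinset_card _ (hWfin m)]
    have hev' : ∀ᶠ m in atTop, 1 < g m := by
      filter_upwards [hev] with m hm
      rw [hgdef]
      rw [hNcard m] at hm
      exact hm
    obtain ⟨m, h1m, hm1⟩ := (hev'.and hlt).exists
    linarith
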